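/- Fix an integer k ≥ 1 and let R = ℂ[[s,t]]. For the holomorphic germ Φ₋ₖ(s,t) = (s, t², t³ + sᵏt), let J be the ideal of R generated by the three 2×2 minors of its Jacobian matrix, namely by 2t, 3t² + sᵏ, and −2k sᵏ⁻¹t². Then J equals the ideal (t, sᵏ), and dim_ℂ R/J = k. -/

import Mathlib

open MvPowerSeries


-- aux lemma 1: ideal equality
theorem aux_span_eq (k : ℕ) (hk : 1 ≤ k) :
    (Ideal.span {(2 : MvPowerSeries (Fin 2) ℂ) * MvPowerSeries.X 1,
        (3 : MvPowerSeries (Fin 2) ℂ) * (MvPowerSeries.X 1) ^ 2 +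
          (MvPowerSeries.X 0 : MvPowerSeries (Fin 2) ℂ) ^ k,
        -(((2 * k : ℕ) : MvPowerSeries (Fin 2) ℂ) *
          (MvPowerSeries.X 0) ^ (k - 1) * (MvPowerSeries.X 1) ^ 2)} =
      Ideal.span {(MvPowerSeries.X 1 : MvPowerSeries (Fin 2) ℂ),
        (MvPowerSeries.X 0 : MvPowerSeries (Fin 2) ℂ) ^ k}) := by
  set t : MvPowerSeries (Fin 2) ℂ := MvPowerSeries.X 1 with ht
  set s : MvPowerSeries (Fin 2) ℂ := MvPowerSeries.X 0 with hs
  apply le_antisymm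
  · rw [Ideal.span_le]
    have htm : t ∈ Ideal.span {t, s ^ k} := Ideal.subset_span (by simp)
    have hsm : s ^ k ∈ Ideal.span {t, s ^ k} := Ideal.subset_span (by simp)
    rintro x hx
    simp only [Set.mem_insert_iff, Set.mem_singleton_iff] at hx
    rcases hx with rfl | rfl | rfl
    · exact Ideal.mul_mem_left _ _ htm
    · exact add_mem (by
        have h : (3 : MvPowerSeries (Fin 2) ℂ) * t ^ 2 = (3 * t) * t := by ring
        rw [h]; exact Ideal.mul_mem_left _ _ htm) hsm
    · have h : -(((2 * k : ℕ) : MvPowerSeries (Fin 2) ℂ) * s ^ (k - 1) * t ^ 2)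
          = (-(((2 * k : ℕ) : MvPowerSeries (Fin 2) ℂ) * s ^ (k - 1) * t)) * t := by ring
      rw [h]; exact Ideal.mul_mem_left _ _ htm
  · rw [Ideal.span_le]
    have h2t : (2 : MvPowerSeries (Fin 2) ℂ) * t ∈ Ideal.span {2 * t, 3 * t ^ 2 + s ^ k,
        -(((2 * k : ℕ) : MvPowerSeries (Fin 2) ℂ) * s ^ (k - 1) * t ^ 2)} :=
      Ideal.subset_span (by simp)
    have htm : t ∈ Ideal.span {2 * t, 3 * t ^ 2 + s ^ k,
        -(((2 * k : ℕ) : MvPowerSeries (Fin 2) ℂ) * s ^ (k - 1) * t ^ 2)} := by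
      have hm := Ideal.mul_mem_left _ ((MvPowerSeries.C (σ := Fin 2) (R := ℂ)) (1/2)) h2t
      have heq : ((MvPowerSeries.C (σ := Fin 2) (R := ℂ)) (1/2)) * (2 * t) = t := by
        have h2 : (2 : MvPowerSeries (Fin 2) ℂ) = (MvPowerSeries.C (σ := Fin 2) (R := ℂ)) 2 :=
          (map_ofNat ((MvPowerSeries.C (σ := Fin 2) (R := ℂ))) 2).symm
        rw [h2, ← mul_assoc, ← map_mul]
        norm_num
      rwa [heq] at hm
    have hsum : (3 : MvPowerSeries (Fin 2) ℂ) * t ^ 2 + s ^ k ∈ Ideal.span {2 * t,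
        3 * t ^ 2 + s ^ k,
        -(((2 * k : ℕ) : MvPowerSeries (Fin 2) ℂ) * s ^ (k - 1) * t ^ 2)} :=
      Ideal.subset_span (by simp)
    have hsk : s ^ k ∈ Ideal.span {2 * t, 3 * t ^ 2 + s ^ k,
        -(((2 * k : ℕ) : MvPowerSeries (Fin 2) ℂ) * s ^ (k - 1) * t ^ 2)} := by
      have hm := sub_mem hsum (Ideal.mul_mem_left _ (3 * t) htm)
      have heq : (3 * t ^ 2 + s ^ k) - (3 * t) * t = s ^ k := by ring
      rwa [heq] at hm
    rintro x hx
    simp only [Set.mem_insert_iff, Set.mem_singleton_iff] at hx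
    rcases hx with rfl | rfl
    · exact htm
    · exact hsk

noncomputable def Lmap (k : ℕ) : MvPowerSeries (Fin 2) ℂ →ₗ[ℂ] (Fin k → ℂ) :=
  LinearMap.pi fun i : Fin k => MvPowerSeries.coeff (R := ℂ) (Finsupp.single 0 (i : ℕ))

theorem Lmap_surj (k : ℕ) : Function.Surjective (Lmap k) := by
  intro v
  refine ⟨∑ i : Fin k, MvPowerSeries.monomial (R := ℂ) (Finsupp.single 0 (i : ℕ)) (v i), ?_⟩
  funext j
  simp only [Lmap, LinearMap.pi_apply, map_sum, MvPowerSeries.coeff_monomial]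
  rw [Finset.sum_eq_single j]
  · simp
  · intro i _ hij
    rw [if_neg]
    intro h
    exact hij (Fin.ext ((Finsupp.single_injective (0 : Fin 2)) h.symm))
  · intro h; exact absurd (Finset.mem_univ j) h

theorem Lmap_ker (k : ℕ) :
    LinearMap.ker (Lmap k) =
      (Ideal.span {(MvPowerSeries.X 1 : MvPowerSeries (Fin 2) ℂ),
        (MvPowerSeries.X 0 : MvPowerSeries (Fin 2) ℂ) ^ k}).restrictScalars ℂ := by
  ext f
  simp only [LinearMap.mem_ker, Submodule.restrictScalars_mem]
  rw [Ideal.mem_span_pair]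
  constructor
  · intro hf
    set f0 : MvPowerSeries (Fin 2) ℂ :=
      fun e => if e 1 = 0 then MvPowerSeries.coeff (R := ℂ) e f else 0 with hf0
    have hcoef : ∀ m : Fin 2 →₀ ℕ, MvPowerSeries.coeff (R := ℂ) m f0 =
        if m 1 = 0 then MvPowerSeries.coeff (R := ℂ) m f else 0 := fun m => rfl
    have h1 : (MvPowerSeries.X 1 : MvPowerSeries (Fin 2) ℂ) ∣ f - f0 := by
      rw [MvPowerSeries.X_dvd_iff]
      intro m hm
      rw [map_sub, hcoef, if_pos hm, sub_self]
    have h2 : (MvPowerSeries.X 0 : MvPowerSeries (Fin 2) ℂ) ^ k ∣ f0 := by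
      rw [MvPowerSeries.X_pow_dvd_iff]
      intro m hm
      rw [hcoef]
      split_ifs with h0
      · have hmeq : m = Finsupp.single 0 (m 0) := by
          ext x
          fin_cases x
          · simp
          · simpa using h0
        rw [hmeq]
        have := congrFun hf ⟨m 0, hm⟩
        simpa [Lmap] using this
      · rfl
    obtain ⟨g, hg⟩ := h1
    obtain ⟨h, hh⟩ := h2
    refine ⟨g, h, ?_⟩
    rw [mul_comm g, mul_comm h, ← hg, ← hh]
    ring
  · rintro ⟨a, b, rfl⟩
    funext i
    have hi0 : (Finsupp.single (0 : Fin 2) (i : ℕ)) 1 = 0 :=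
      Finsupp.single_eq_of_ne' (by decide)
    have hik : (Finsupp.single (0 : Fin 2) (i : ℕ)) 0 = (i : ℕ) := by simp
    have h1 : MvPowerSeries.coeff (R := ℂ) (Finsupp.single 0 (i : ℕ))
        (a * MvPowerSeries.X 1) = 0 := by
      refine MvPowerSeries.X_dvd_iff.mp ⟨a, mul_comm _ _⟩ _ hi0
    have h2 : MvPowerSeries.coeff (R := ℂ) (Finsupp.single 0 (i : ℕ))
        (b * MvPowerSeries.X 0 ^ k) = 0 := by
      refine MvPowerSeries.X_pow_dvd_iff.mp ⟨b, mul_comm _ _⟩ _ ?_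
      rw [hik]; exact i.isLt
    simp [Lmap, h1, h2]

theorem aux_finrank (k : ℕ) :
    Module.finrank ℂ
      (MvPowerSeries (Fin 2) ℂ ⧸
        Ideal.span {(MvPowerSeries.X 1 : MvPowerSeries (Fin 2) ℂ),
          (MvPowerSeries.X 0 : MvPowerSeries (Fin 2) ℂ) ^ k}) = k := by
  set I := Ideal.span {(MvPowerSeries.X 1 : MvPowerSeries (Fin 2) ℂ),
    (MvPowerSeries.X 0 : MvPowerSeries (Fin 2) ℂ) ^ k}
  have e1 := (Submodule.Quotient.restrictScalarsEquiv ℂ I).symm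
  have e2 := Submodule.quotEquivOfEq _ _ (Lmap_ker k)
  have e3 := (Lmap k).quotKerEquivOfSurjective (Lmap_surj k)
  calc Module.finrank ℂ (MvPowerSeries (Fin 2) ℂ ⧸ I)
      = Module.finrank ℂ (Fin k → ℂ) :=
        (e1.trans (e2.symm.trans e3)).finrank_eq
    _ = k := Module.finrank_fin_fun ℂ

/-- For the germ `Φ₋ₖ(s,t) = (s, t², t³ + sᵏt)`, the Jacobian minor ideal
`J = (2t, 3t² + sᵏ, −2k sᵏ⁻¹t²)` of `R = ℂ[[s,t]]` equals `(t, sᵏ)` and has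
codimension `k`; hence `C(Φ₋ₖ) = k` and the sign-refined Smale invariant is `−k`. -/
theorem stmt_4 (k : ℕ) (hk : 1 ≤ k) :
    (Ideal.span {(2 : MvPowerSeries (Fin 2) ℂ) * MvPowerSeries.X 1,
        (3 : MvPowerSeries (Fin 2) ℂ) * (MvPowerSeries.X 1) ^ 2 +
          (MvPowerSeries.X 0 : MvPowerSeries (Fin 2) ℂ) ^ k,
        -(((2 * k : ℕ) : MvPowerSeries (Fin 2) ℂ) *
          (MvPowerSeries.X 0) ^ (k - 1) * (MvPowerSeries.X 1) ^ 2)} =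
      Ideal.span {(MvPowerSeries.X 1 : MvPowerSeries (Fin 2) ℂ),
        (MvPowerSeries.X 0 : MvPowerSeries (Fin 2) ℂ) ^ k}) ∧
    Module.finrank ℂ
      (MvPowerSeries (Fin 2) ℂ ⧸
        Ideal.span {(2 : MvPowerSeries (Fin 2) ℂ) * MvPowerSeries.X 1,
          (3 : MvPowerSeries (Fin 2) ℂ) * (MvPowerSeries.X 1) ^ 2 +
            (MvPowerSeries.X 0 : MvPowerSeries (Fin 2) ℂ) ^ k,
          -(((2 * k : ℕ) : MvPowerSeries (Fin 2) ℂ) *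
            (MvPowerSeries.X 0) ^ (k - 1) * (MvPowerSeries.X 1) ^ 2)}) = k := by
  refine ⟨aux_span_eq k hk, ?_⟩
  rw [aux_span_eq k hk]
  exact aux_finrank k
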